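/- Let S be a normal domain containing a compatible system of p-power roots p^{1/p^m} of p, flat over Z_p. Then the element ξ_n := [p^{1/p^{n-1}}] − p of W_n(S/pS), where [·] denotes the Teichmüller lift, generates the kernel of the ring homomorphism c_n : W_n(S/pS) → S/p^nS given by c_n(s_0,…,s_{n-1}) = Σ_{i=0}^{n-1} p^i \tilde{s}_i^{p^{n-1-i}}. -/

import Mathlib

open WittVector

lemma ghost_formula (p : ℕ) [Fact p.Prime] {R : Type*} [CommRing R] (k : ℕ) (x : WittVector p R) :
    WittVector.ghostComponent k x
      = ∑ i ∈ Finset.range (k+1), (p:R)^i * x.coeff i ^ p ^ (k - i) := by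
  rw [WittVector.ghostComponent_apply, wittPolynomial_eq_sum_C_mul_X_pow]
  simp [map_sum]

lemma ghost_zero_eq (p : ℕ) [Fact p.Prime] {R : Type*} [CommRing R] (x : WittVector p R) :
    WittVector.ghostComponent 0 x = x.coeff 0 := by
  rw [ghost_formula]; simp

lemma eq_versch (p : ℕ) [hp : Fact p.Prime] {R : Type*} [CommRing R] (z : WittVector p R)
    (h : z.coeff 0 = 0) :
    z = WittVector.verschiebung (WittVector.mk p fun i => z.coeff (i+1)) := by
  ext i
  cases i with
  | zero => rw [h, WittVector.verschiebung_coeff_zero]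
  | succ j => rw [WittVector.verschiebung_coeff_succ]; rfl

lemma rpow_eq (p : ℕ) {S : Type*} [CommRing S] (r : ℕ → S)
    (hr0 : r 0 = (p : S)) (hr : ∀ m, r (m + 1) ^ p = r m) :
    ∀ m, r m ^ p ^ m = (p : S) := by
  intro m
  induction m with
  | zero => simpa using hr0
  | succ k ih => rw [pow_succ, pow_mul', ← ih, hr]

lemma key (p : ℕ) [hpp : Fact p.Prime] (S : Type*) [CommRing S] [IsDomain S]
    [IsIntegrallyClosed S]
    (hp : ∀ x : S, (p : S) * x = 0 → x = 0)
    (r : ℕ → S) (hr0 : r 0 = (p : S)) (hr : ∀ m, r (m + 1) ^ p = r m)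
    [CharP (S ⧸ Ideal.span {(p : S)}) p] :
    ∀ (m : ℕ) (x : WittVector p S),
      (p:S)^m ∣ WittVector.ghostComponent (m-1) x →
      ∃ z w : WittVector p (S ⧸ Ideal.span {(p : S)}),
        WittVector.map (Ideal.Quotient.mk _) x
          = z * (WittVector.teichmuller p (Ideal.Quotient.mk _ (r (m-1)))
              - (p : WittVector p (S ⧸ Ideal.span {(p : S)}))) + w
        ∧ ∀ i, i < m → w.coeff i = 0 := by
  intro m
  induction m with
  | zero =>
    intro x _
    exact ⟨0, WittVector.map (Ideal.Quotient.mk _) x, by ring,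
      fun i hi => absurd hi (Nat.not_lt_zero i)⟩
  | succ m ih =>
    intro x hg
    simp only [Nat.add_sub_cancel] at hg ⊢
    set A := S ⧸ Ideal.span {(p : S)} with hA
    set mkA : S →+* A := Ideal.Quotient.mk _ with hmkA
    have hpne : (p : S) ≠ 0 := fun h => one_ne_zero (hp 1 (by rw [h, zero_mul]))
    have hrpow := rpow_eq p r hr0 hr
    have hrm : r m ≠ 0 := by
      intro h
      apply hpne
      rw [← hrpow m, h, zero_pow (pow_ne_zero m hpp.out.ne_zero)]
    -- decompose the ghost component
    obtain ⟨d, hd⟩ := hg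
    have hgf := ghost_formula p m x
    rw [Finset.sum_range_succ'] at hgf
    set g : S := ∑ i ∈ Finset.range m, (p:S)^i * x.coeff (i+1) ^ p^(m-1-i) with hgdef
    have hsum : ∑ i ∈ Finset.range m, (p:S)^(i+1) * x.coeff (i+1) ^ p^(m-(i+1)) = (p:S) * g := by
      rw [hgdef, Finset.mul_sum]
      apply Finset.sum_congr rfl
      intro i _
      have h2 : m - (i+1) = m - 1 - i := by omega
      rw [h2, pow_succ]
      ring
    have h1 : WittVector.ghostComponent m x = (p:S) * g + x.coeff 0 ^ p ^ m := by
      rw [hgf, hsum]; simp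
    have hx0 : x.coeff 0 ^ p ^ m = (p:S) * ((p:S)^m * d - g) := by
      have := hd
      rw [h1] at this
      rw [mul_sub]
      rw [show (p:S) * ((p:S)^m * d) = (p:S)^(m+1) * d by ring]
      rw [← this]; ring
    -- normality: find t with x₀ = r m * t
    obtain ⟨t, ht⟩ : ∃ t : S, x.coeff 0 = r m * t := by
      set K := FractionRing S
      set φ := algebraMap S K with hφdef
      have hφ : Function.Injective φ := IsFractionRing.injective S K
      have hrm' : φ (r m) ≠ 0 := fun h => hrm (hφ (by rw [h, map_zero]))
      have hφp : φ (p:S) ≠ 0 := fun h => hpne (hφ (by rw [h, map_zero]))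
      set τ : K := φ (x.coeff 0) / φ (r m) with hτdef
      have hτ : τ ^ p ^ m = φ ((p:S)^m * d - g) := by
        rw [hτdef, div_pow, ← map_pow, ← map_pow, hx0, hrpow m, map_mul,
          mul_div_cancel_left₀ _ hφp]
      have hint : IsIntegral S τ := by
        refine ⟨Polynomial.X ^ p ^ m - Polynomial.C ((p:S)^m * d - g),
          Polynomial.monic_X_pow_sub_C _ (pow_ne_zero m hpp.out.ne_zero), ?_⟩
        simp [Polynomial.eval₂_sub, hτ, hφdef]
      obtain ⟨t, ht⟩ := IsIntegrallyClosed.isIntegral_iff.mp hint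
      refine ⟨t, hφ ?_⟩
      rw [map_mul, ht, hτdef, mul_comm, div_mul_cancel₀ _ hrm']
    -- Witt manipulations
    set a : WittVector p A := WittVector.map mkA x with hadef
    set Ξ : WittVector p A := WittVector.teichmuller p (mkA (r m)) - p with hΞdef
    have hpA : (p : A) = 0 := CharP.cast_eq_zero A p
    have hb0 : (a - WittVector.teichmuller p (mkA t) * Ξ).coeff 0 = 0 := by
      rw [← ghost_zero_eq, hΞdef, map_sub, map_mul, map_sub,
        WittVector.ghostComponent_teichmuller, WittVector.ghostComponent_teichmuller,
        ghost_zero_eq, map_natCast, hadef, WittVector.map_coeff, ht, hpA, map_mul]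
      ring
    set b₀ : WittVector p A :=
      WittVector.mk p (fun i => (a - WittVector.teichmuller p (mkA t) * Ξ).coeff (i+1)) with hb₀
    have hbV : a - WittVector.teichmuller p (mkA t) * Ξ = WittVector.verschiebung b₀ :=
      eq_versch p _ hb0
    obtain ⟨y, hy⟩ := WittVector.map_surjective mkA Ideal.Quotient.mk_surjective b₀
    set E : WittVector p S :=
      WittVector.teichmuller p t * (WittVector.teichmuller p (r m) - (p : WittVector p S))
        + WittVector.verschiebung y with hEdef
    have hE : WittVector.map mkA E = a := by
      rw [hEdef, map_add, WittVector.map_verschiebung, hy, ← hbV, map_mul,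
        WittVector.map_teichmuller, map_sub, WittVector.map_teichmuller, map_natCast]
      ring
    have hcoeff : ∀ i, (p:S) ∣ x.coeff i - E.coeff i := by
      intro i
      have h3 : mkA (x.coeff i) = mkA (E.coeff i) := by
        rw [← WittVector.map_coeff, ← WittVector.map_coeff, hE]
      rw [← Ideal.mem_span_singleton]
      exact Ideal.Quotient.eq.mp h3
    have hgE : (p:S)^(m+1) ∣ WittVector.ghostComponent m E := by
      have hdiff : (p:S)^(m+1) ∣
          WittVector.ghostComponent m x - WittVector.ghostComponent m E := by
        rw [ghost_formula, ghost_formula, ← Finset.sum_sub_distrib]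
        apply Finset.dvd_sum
        intro i hi
        have hi' : i ≤ m := Nat.lt_succ_iff.mp (Finset.mem_range.mp hi)
        have h4 : (p:S)^(m-i+1) ∣ x.coeff i ^ p^(m-i) - E.coeff i ^ p^(m-i) :=
          dvd_sub_pow_of_dvd_sub (hcoeff i) (m-i)
        have h5 : (p:S)^(m+1) = (p:S)^i * (p:S)^(m-i+1) := by
          rw [← pow_add]; congr 1; omega
        rw [h5, ← mul_sub]
        exact mul_dvd_mul_left _ h4
      have h6 : (p:S)^(m+1) ∣ WittVector.ghostComponent m x := ⟨d, hd⟩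
      have := dvd_sub h6 hdiff
      simpa using this
    -- ghost of E, and divisibility of y's ghost
    have hyg : (p:S)^m ∣ WittVector.ghostComponent (m-1) y := by
      rcases Nat.eq_zero_or_pos m with hm | hm
      · rw [hm, pow_zero]; exact one_dvd _
      · obtain ⟨k, rfl⟩ : ∃ k, m = k + 1 := ⟨m - 1, by omega⟩
        have hgE2 : WittVector.ghostComponent (k+1) E
            = (p:S) * WittVector.ghostComponent k y := by
          rw [hEdef, map_add, map_mul, map_sub, WittVector.ghostComponent_teichmuller,
            WittVector.ghostComponent_teichmuller, map_natCast,
            WittVector.ghostComponent_verschiebung, hrpow (k+1)]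
          ring
        rw [hgE2] at hgE
        obtain ⟨e, he⟩ := hgE
        have h0 : (p:S) * (WittVector.ghostComponent k y - (p:S)^(k+1) * e) = 0 := by
          rw [mul_sub, he]; ring
        have h7 := hp _ h0
        have h8 : WittVector.ghostComponent k y = (p:S)^(k+1) * e := sub_eq_zero.mp h7
        simpa [Nat.add_sub_cancel] using ⟨e, h8⟩
    obtain ⟨z', w', hzw, hw'⟩ := ih y hyg
    -- frobenius of Ξ
    have hF : WittVector.frobenius Ξ
        = WittVector.teichmuller p (mkA (r (m-1)))
          - (p : WittVector p A) := by
      rw [hΞdef, WittVector.frobenius_eq_map_frobenius, map_sub, WittVector.map_teichmuller,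
        map_natCast]
      congr 1
      have hfr : _root_.frobenius A p (mkA (r m)) = mkA (r m ^ p) := by
        rw [frobenius_def, map_pow]
      rw [hfr]
      rcases Nat.eq_zero_or_pos m with hm | hm
      · have e1 : mkA (r 0 ^ p) = 0 := by
          rw [hr0, ← Nat.cast_pow, hmkA]
          rw [Ideal.Quotient.eq_zero_iff_mem, Ideal.mem_span_singleton, Nat.cast_pow]
          exact dvd_pow_self _ hpp.out.ne_zero
        have e2 : mkA (r 0) = 0 := by
          rw [hr0, hmkA, Ideal.Quotient.eq_zero_iff_mem, Ideal.mem_span_singleton]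
        rw [hm, e1, e2]
      · obtain ⟨k, hk⟩ : ∃ k, m = k + 1 := ⟨m - 1, by omega⟩
        rw [hk, Nat.add_sub_cancel, hr k]
    -- assemble
    refine ⟨WittVector.teichmuller p (mkA t) + WittVector.verschiebung z',
      WittVector.verschiebung w', ?_, ?_⟩
    · have hb₀' : b₀ = z' * WittVector.frobenius Ξ + w' := by
        rw [hF, ← hzw, hy]
      calc WittVector.map mkA x
          = WittVector.teichmuller p (mkA t) * Ξ
            + (a - WittVector.teichmuller p (mkA t) * Ξ) := by rw [← hadef]; ring
        _ = WittVector.teichmuller p (mkA t) * Ξ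
            + (WittVector.verschiebung (z' * WittVector.frobenius Ξ)
              + WittVector.verschiebung w') := by
            rw [hbV, hb₀', map_add]
        _ = (WittVector.teichmuller p (mkA t) + WittVector.verschiebung z') * Ξ
            + WittVector.verschiebung w' := by
            rw [WittVector.verschiebung_mul_frobenius]; ring
    · intro i hi
      cases i with
      | zero => exact WittVector.verschiebung_coeff_zero w'
      | succ j =>
        rw [WittVector.verschiebung_coeff_succ]
        exact hw' j (by omega)


/-- If `S` is a normal domain, flat over `ℤ_p`, containing a compatible system
`r m` of `p`-power roots of `p` (`r 0 = p`, `(r (m+1))^p = r m`), then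
`ξ_n := [r (n-1)] − p` generates the kernel of the homomorphism
`c_n : W_n(S/pS) → S/p^nS`, `(s_0,…,s_{n-1}) ↦ Σ p^i s̃_i^{p^{n-1-i}}`. -/
theorem stmt_3 (p : ℕ) [Fact p.Prime] (n : ℕ) (hn : 1 ≤ n)
    (S : Type*) [CommRing S] [IsDomain S] [IsIntegrallyClosed S]
    (hp : ∀ x : S, (p : S) * x = 0 → x = 0)
    (r : ℕ → S) (hr0 : r 0 = (p : S)) (hr : ∀ m, r (m + 1) ^ p = r m)
    (c : TruncatedWittVector p n (S ⧸ Ideal.span {(p : S)}) →+*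
        S ⧸ Ideal.span {(p : S) ^ n})
    (hc : ∀ s : Fin n → S,
      c (TruncatedWittVector.mk p fun i => Ideal.Quotient.mk _ (s i)) =
        Ideal.Quotient.mk _ (∑ i : Fin n, (p : S) ^ (i : ℕ) * s i ^ p ^ (n - 1 - (i : ℕ)))) :
    RingHom.ker c = Ideal.span
      {TruncatedWittVector.mk p
          (fun i => if (i : ℕ) = 0 then Ideal.Quotient.mk _ (r (n - 1)) else 0) -
        (p : TruncatedWittVector p n (S ⧸ Ideal.span {(p : S)}))} := by
  classical
  set A := S ⧸ Ideal.span {(p : S)} with hA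
  set mkA : S →+* A := Ideal.Quotient.mk _ with hmkA
  set Ξ' : TruncatedWittVector p n A := TruncatedWittVector.mk p
      (fun i => if (i : ℕ) = 0 then mkA (r (n - 1)) else 0)
      - (p : TruncatedWittVector p n A) with hΞ'
  by_cases htriv : (1 : A) = 0
  · haveI : Subsingleton A := subsingleton_of_zero_eq_one htriv.symm
    have hsub : ∀ u v : TruncatedWittVector p n A, u = v := by
      intro u v
      apply TruncatedWittVector.ext
      intro i
      exact Subsingleton.elim _ _
    ext ζ
    constructor
    · intro _; rw [hsub ζ 0]; exact zero_mem _
    · intro _; rw [hsub ζ 0]; exact zero_mem _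
  · haveI : Nontrivial A := nontrivial_of_ne 1 0 htriv
    have hpA : (p : A) = 0 := by
      rw [show ((p : ℕ) : A) = mkA ((p : ℕ) : S) from (map_natCast mkA p).symm, hmkA,
        Ideal.Quotient.eq_zero_iff_mem]
      exact Ideal.mem_span_singleton_self _
    haveI : CharP A p := (CharP.charP_iff_prime_eq_zero Fact.out).mpr hpA
    have hrel : ∀ x : WittVector p S,
        c (WittVector.truncate n (WittVector.map mkA x))
          = Ideal.Quotient.mk (Ideal.span {(p : S) ^ n})
              (WittVector.ghostComponent (n - 1) x) := by
      intro x
      have h1 : WittVector.truncate n (WittVector.map mkA x)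
          = TruncatedWittVector.mk p (fun i : Fin n => mkA (x.coeff i)) := by
        apply TruncatedWittVector.ext
        intro i
        rw [WittVector.coeff_truncate, WittVector.map_coeff, TruncatedWittVector.coeff_mk]
      rw [h1, hc (fun i => x.coeff i)]
      congr 1
      rw [ghost_formula]
      have h2 : n - 1 + 1 = n := by omega
      rw [h2, Finset.sum_range]
    have hmapξ : WittVector.map mkA
          (WittVector.teichmuller p (r (n - 1)) - (p : WittVector p S))
        = WittVector.teichmuller p (mkA (r (n - 1))) - (p : WittVector p A) := by
      rw [map_sub, WittVector.map_teichmuller, map_natCast]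
    have hgenA : WittVector.truncate n
          (WittVector.teichmuller p (mkA (r (n - 1))) - (p : WittVector p A)) = Ξ' := by
      have h6 : WittVector.truncate n (WittVector.teichmuller p (mkA (r (n - 1))))
          = TruncatedWittVector.mk p
              (fun i => if (i : ℕ) = 0 then mkA (r (n - 1)) else 0) := by
        apply TruncatedWittVector.ext
        intro i
        rw [WittVector.coeff_truncate, TruncatedWittVector.coeff_mk]
        rcases Nat.eq_zero_or_pos (i : ℕ) with h | h
        · rw [if_pos h, show ((i : ℕ)) = 0 from h, WittVector.teichmuller_coeff_zero]
        · rw [if_neg (by omega), WittVector.teichmuller_coeff_pos _ _ _ h]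
      rw [map_sub, map_natCast, hΞ', h6]
    have hker : c Ξ' = 0 := by
      rw [← hgenA, ← hmapξ, hrel]
      have h3 : WittVector.ghostComponent (n - 1)
          (WittVector.teichmuller p (r (n - 1)) - (p : WittVector p S)) = 0 := by
        rw [map_sub, WittVector.ghostComponent_teichmuller, map_natCast,
          rpow_eq p r hr0 hr (n - 1), sub_self]
      rw [h3, map_zero]
    ext ζ
    rw [RingHom.mem_ker]
    constructor
    · intro hζ
      obtain ⟨aW, haW⟩ := WittVector.truncate_surjective p n A ζ
      obtain ⟨x, hx⟩ := WittVector.map_surjective mkA Ideal.Quotient.mk_surjective aW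
      have hg : (p : S) ^ n ∣ WittVector.ghostComponent (n - 1) x := by
        have h4 := hrel x
        rw [hx, haW, hζ] at h4
        have h5 := Ideal.Quotient.eq_zero_iff_mem.mp h4.symm
        rwa [Ideal.mem_span_singleton] at h5
      obtain ⟨z, w, hzw, hw⟩ := key p S hp r hr0 hr n x hg
      have h10 : WittVector.truncate n w = 0 := by
        apply TruncatedWittVector.ext
        intro i
        rw [WittVector.coeff_truncate, hw i i.2, TruncatedWittVector.coeff_zero]
      have h11 := congrArg (WittVector.truncate n) hzw
      rw [map_add, map_mul, h10, add_zero, hgenA, hx, haW] at h11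
      rw [h11]
      exact Ideal.mem_span_singleton.mpr ⟨WittVector.truncate n z, mul_comm _ _⟩
    · intro hζ
      obtain ⟨v, hv⟩ := Ideal.mem_span_singleton.mp hζ
      rw [hv, map_mul]
      have : c Ξ' = 0 := hker
      rw [hΞ'] at this
      rw [this, zero_mul]
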